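/- If b_1, …, b_N : Fin n → ℝ are mutually independent random variables under P and each b_i is non-constant, then 2^N ≤ n. Consequently, the maximal size of a mutually independent family of random variables on Ω containing at most one constant variable is at most max{k ∈ ℕ : 2^{k−1} ≤ n}. -/

import Mathlib

open MeasureTheory

lemma key_lemma {n N : ℕ} (hn : 1 ≤ n)
    (p : Fin n → ℝ) (hp : ∀ i, 0 < p i ∧ p i < 1)
    (P : Measure (Fin n))
    (hP : ∀ i : Fin n, P {i} = ENNReal.ofReal (p i))
    (b : Fin N → Fin n → ℝ)
    (hind : ∀ v : Fin N → ℝ,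
      P (⋂ i, {ω | b i ω = v i}) = ∏ i, P {ω | b i ω = v i})
    (T : Finset (Fin N))
    (hT : ∀ i ∈ T, ∃ ω ω' : Fin n, b i ω ≠ b i ω') :
    2 ^ T.card ≤ n := by
  classical
  set ω₀ : Fin n := ⟨0, hn⟩ with hω₀
  have hxy : ∀ i : Fin N, ∃ x y : ℝ,
      ((∃ ω, b i ω = x) ∧ (∃ ω, b i ω = y)) ∧ (i ∈ T → x ≠ y) := by
    intro i
    by_cases h : i ∈ T
    · obtain ⟨ω, ω', hne⟩ := hT i h
      exact ⟨b i ω, b i ω', ⟨⟨ω, rfl⟩, ⟨ω', rfl⟩⟩, fun _ => hne⟩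
    · exact ⟨b i ω₀, b i ω₀, ⟨⟨ω₀, rfl⟩, ⟨ω₀, rfl⟩⟩, fun h' => absurd h' h⟩
  choose x y hat hne using hxy
  -- positivity of level sets that are attained
  have pos : ∀ (i : Fin N) (v : ℝ), (∃ ω, b i ω = v) → P {ω | b i ω = v} ≠ 0 := by
    intro i v ⟨ω, hω⟩
    have hsub : ({ω} : Set (Fin n)) ⊆ {ω' | b i ω' = v} := by
      intro z hz; rcases hz with rfl; exact hω
    have h1 : P {ω} ≤ P {ω' | b i ω' = v} := measure_mono hsub
    intro h
    rw [h] at h1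
    have h2 : P {ω} = 0 := le_antisymm h1 (zero_le)
    rw [hP ω, ENNReal.ofReal_eq_zero] at h2
    exact absurd h2 (not_le.mpr (hp ω).1)
  -- each combination is nonempty
  have hA : ∀ s : Fin N → Bool,
      ∃ ω, ω ∈ ⋂ i, {ω | b i ω = (if s i then x i else y i)} := by
    intro s
    have hprod := hind (fun i => if s i then x i else y i)
    have hne0 : P (⋂ i, {ω | b i ω = (if s i then x i else y i)}) ≠ 0 := by
      rw [hprod]
      rw [Finset.prod_ne_zero_iff]
      intro i _
      by_cases h : s i
      · simp only [h, if_true]; exact pos i (x i) (hat i).1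
      · simp only [h, if_false]; exact pos i (y i) (hat i).2
    by_contra hempty
    push_neg at hempty
    have : (⋂ i, {ω | b i ω = (if s i then x i else y i)}) = ∅ := by
      ext ω; simp only [Set.mem_empty_iff_false, iff_false]
      exact fun h => hempty ω h
    rw [this] at hne0
    exact hne0 measure_empty
  choose g hg using hA
  -- injection from (T → Bool) into Fin n
  set f : ({i // i ∈ T} → Bool) → Fin n :=
    fun s => g (fun i => if h : i ∈ T then s ⟨i, h⟩ else true) with hf
  have hinj : Function.Injective f := by
    intro s s' hss
    funext ⟨i, hi⟩
    by_contra hdiff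
    set S : Fin N → Bool := fun j => if h : j ∈ T then s ⟨j, h⟩ else true with hS
    set S' : Fin N → Bool := fun j => if h : j ∈ T then s' ⟨j, h⟩ else true with hS'
    have h1 : b i (g S) = (if S i then x i else y i) := by
      have := hg S
      exact Set.mem_iInter.mp this i
    have h2 : b i (g S') = (if S' i then x i else y i) := by
      have := hg S'
      exact Set.mem_iInter.mp this i
    have hgg : g S = g S' := hss
    rw [hgg, h2] at h1
    have hSi : S i = s ⟨i, hi⟩ := by simp [hS, hi]
    have hS'i : S' i = s' ⟨i, hi⟩ := by simp [hS', hi]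
    rw [hSi, hS'i] at h1
    cases hb : s ⟨i, hi⟩ <;> cases hb' : s' ⟨i, hi⟩ <;>
      simp [hb, hb'] at h1 hdiff <;>
      exact (hne i hi) (by rw [h1]) <;> exact hdiff
  have hcard := Fintype.card_le_of_injective f hinj
  simpa [Fintype.card_fun] using hcard

theorem stmt_5 (n : ℕ) (hn : 1 ≤ n)
    (p : Fin n → ℝ) (hp : ∀ i, 0 < p i ∧ p i < 1) (hps : ∑ i, p i = 1)
    (P : Measure (Fin n)) [IsProbabilityMeasure P]
    (hP : ∀ i : Fin n, P {i} = ENNReal.ofReal (p i)) :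
    (∀ (N : ℕ) (b : Fin N → Fin n → ℝ),
      (∀ v : Fin N → ℝ,
        P (⋂ i, {ω | b i ω = v i}) = ∏ i, P {ω | b i ω = v i}) →
      (∀ i : Fin N, ∃ ω ω' : Fin n, b i ω ≠ b i ω') →
      2 ^ N ≤ n) ∧
    (∀ (N : ℕ) (b : Fin N → Fin n → ℝ),
      (∀ v : Fin N → ℝ,
        P (⋂ i, {ω | b i ω = v i}) = ∏ i, P {ω | b i ω = v i}) →
      ({i : Fin N | ∀ ω ω' : Fin n, b i ω = b i ω'}.Subsingleton) →
      N ≤ sSup {k : ℕ | 2 ^ (k - 1) ≤ n}) := by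
  classical
  constructor
  · intro N b hind hnc
    have := key_lemma hn p hp P hP b hind Finset.univ (fun i _ => hnc i)
    simpa using this
  · intro N b hind hsub
    set T : Finset (Fin N) :=
      Finset.univ.filter (fun i => ¬ ∀ ω ω' : Fin n, b i ω = b i ω') with hTdef
    have hT : ∀ i ∈ T, ∃ ω ω' : Fin n, b i ω ≠ b i ω' := by
      intro i hi
      simp only [hTdef, Finset.mem_filter] at hi
      push_neg at hi
      exact hi.2
    have hkey := key_lemma hn p hp P hP b hind T hT
    have hcardc : Tᶜ.card ≤ 1 := by
      rw [Finset.card_le_one]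
      intro a ha b' hb'
      simp only [hTdef, Finset.mem_compl, Finset.mem_filter, Finset.mem_univ,
        true_and, not_not] at ha hb'
      exact hsub ha hb'
    have hTcard : N - 1 ≤ T.card := by
      have := Finset.card_compl T (α := Fin N)
      have hN : T.card + Tᶜ.card = N := by
        rw [this, Fintype.card_fin]
        have : T.card ≤ N := by simpa using T.card_le_univ
        omega
      omega
    have h2 : 2 ^ (N - 1) ≤ n := le_trans (Nat.pow_le_pow_right (by norm_num) hTcard) hkey
    have hmem : N ∈ {k : ℕ | 2 ^ (k - 1) ≤ n} := h2
    have hbdd : BddAbove {k : ℕ | 2 ^ (k - 1) ≤ n} := by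
      refine ⟨n + 1, fun k hk => ?_⟩
      have h1 : k - 1 < 2 ^ (k - 1) := Nat.lt_two_pow_self
      have : k - 1 < n := lt_of_lt_of_le h1 hk
      omega
    exact le_csSup hbdd hmem
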